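/- For every real t with |t| < 1, the double polylogarithm Li_{(2,1)}(t) = ∑_{k_1 > k_2 ≥ 1} t^{k_1}/(k_1² k_2) equals the iterated integral ∫_0^t (1/t_1) ∫_0^{t_1} (1/(1-t_2)) ∫_0^{t_2} (1/(1-t_3)) dt_3 dt_2 dt_1. -/

import Mathlib

open MeasureTheory intervalIntegral Set Real Interval

namespace Li21Aux

abbrev Idx := {p : ℕ × ℕ // p.2 < p.1 ∧ 1 ≤ p.2}

/-- reindexing equivalence -/
def e : ℕ × ℕ ≃ Idx where
  toFun q := ⟨(q.1 + q.2 + 2, q.1 + 1), by omega, by omega⟩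
  invFun p := (p.1.2 - 1, p.1.1 - p.1.2 - 1)
  left_inv q := by obtain ⟨m, j⟩ := q; simp; omega
  right_inv p := by
    obtain ⟨⟨a, b⟩, h1, h2⟩ := p
    simp only [Subtype.mk.injEq, Prod.mk.injEq]
    constructor <;> omega

lemma summable_pairs {r : ℝ} (h0 : 0 ≤ r) (h1 : r < 1) :
    Summable fun q : ℕ × ℕ => r ^ (q.1 + q.2 + 1) := by
  have hg : Summable fun n : ℕ => ‖r ^ n‖ := by
    simpa [abs_of_nonneg h0] using summable_geometric_of_lt_one h0 h1
  have := (summable_mul_of_summable_norm (f := fun n : ℕ => r ^ n)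
    (g := fun n : ℕ => r ^ n) hg hg).mul_left r
  refine this.congr fun q => ?_
  ring

lemma summable_aux {r : ℝ} (h0 : 0 ≤ r) (h1 : r < 1) :
    Summable fun p : Idx => r ^ (p.1.1 - 1) := by
  rw [← e.summable_iff]
  refine (summable_pairs h0 h1).congr fun q => ?_
  simp [e, Function.comp]

lemma abs_le_of_mem_uIoc {t x : ℝ} (hx : x ∈ Ι (0:ℝ) t) : |x| ≤ |t| := by
  rcases hx with ⟨h1, h2⟩
  rw [abs_le]
  refine ⟨le_trans (le_min (neg_nonpos.mpr (abs_nonneg t)) (neg_abs_le t)) h1.le,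
    h2.trans (max_le (abs_nonneg t) (le_abs_self t))⟩

lemma abs_le_of_mem_uIcc {t x : ℝ} (hx : x ∈ uIcc (0:ℝ) t) : |x| ≤ |t| := by
  rcases hx with ⟨h1, h2⟩
  rw [abs_le]
  refine ⟨le_trans (le_min (neg_nonpos.mpr (abs_nonneg t)) (neg_abs_le t)) h1,
    h2.trans (max_le (abs_nonneg t) (le_abs_self t))⟩

/-- swap tsum and interval integral -/
lemma tsum_intervalIntegral {f : Idx → ℝ → ℝ} {t : ℝ}
    (hc : ∀ i, Continuous (f i)) (b : Idx → ℝ)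
    (hb : ∀ i, ∀ x ∈ Ι (0:ℝ) t, ‖f i x‖ ≤ b i) (hb0 : ∀ i, 0 ≤ b i)
    (hbs : Summable b) :
    ∑' i, ∫ x in (0:ℝ)..t, f i x = ∫ x in (0:ℝ)..t, ∑' i, f i x := by
  have hvol : volume (Ι (0:ℝ) t) < ⊤ := by
    rw [uIoc, Real.volume_Ioc]; exact ENNReal.ofReal_lt_top
  have hvolr : (volume (Ι (0:ℝ) t)).toReal ≤ |t| := by
    rw [uIoc, Real.volume_Ioc,
      ENNReal.toReal_ofReal (by rw [sub_nonneg]; exact min_le_max)]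
    rw [max_sub_min_eq_abs]; simp
  have hint : ∀ i, Integrable (f i) (volume.restrict (Ι (0:ℝ) t)) := fun i =>
    ((hc i).integrableOn_uIoc : IntegrableOn (f i) (Ι (0:ℝ) t) volume)
  have hsum : Summable fun i => ∫ x in Ι (0:ℝ) t, ‖f i x‖ := by
    refine Summable.of_nonneg_of_le (fun i => integral_nonneg fun x => norm_nonneg _)
      (fun i => ?_) (hbs.mul_right |t|)
    calc ∫ x in Ι (0:ℝ) t, ‖f i x‖ ≤ b i * (volume (Ι (0:ℝ) t)).toReal := by
          refine (le_abs_self _).trans ?_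
          rw [← Real.norm_eq_abs]
          exact norm_setIntegral_le_of_norm_le_const hvol
            (fun x hx => (norm_norm (f i x)).le.trans (hb i x hx))
      _ ≤ b i * |t| := mul_le_mul_of_nonneg_left hvolr (hb0 i)
  have key := integral_tsum_of_summable_integral_norm hint hsum
  simp_rw [intervalIntegral_eq_integral_uIoc, smul_eq_mul]
  rw [tsum_mul_left, key]

lemma one_sub_pos' {x : ℝ} (hx : |x| < 1) : 0 < 1 - x := by
  rw [abs_lt] at hx; linarith [hx.2]

lemma hasDerivAt_neg_log {s : ℝ} (hs : |s| < 1) :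
    HasDerivAt (fun u => -Real.log (1 - u)) (1 / (1 - s)) s := by
  have h1 : (1:ℝ) - s ≠ 0 := (one_sub_pos' hs).ne'
  have h2 : HasDerivAt (fun u : ℝ => 1 - u) (-1) s := by
    simpa using (hasDerivAt_id s).const_sub 1
  have := ((Real.hasDerivAt_log h1).comp s h2).neg
  exact this.congr_deriv (by ring)

lemma hasDerivAt_half_sq_log {s : ℝ} (hs : |s| < 1) :
    HasDerivAt (fun u => Real.log (1 - u) ^ 2 / 2) (-Real.log (1 - s) * (1 - s)⁻¹) s := by
  have h1 : (1:ℝ) - s ≠ 0 := (one_sub_pos' hs).ne'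
  have h2 : HasDerivAt (fun u : ℝ => 1 - u) (-1) s := by
    simpa using (hasDerivAt_id s).const_sub 1
  have hl : HasDerivAt (fun u => Real.log (1 - u)) ((1 - s)⁻¹ * (-1)) s :=
    (Real.hasDerivAt_log h1).comp s h2
  have := (hl.pow 2).div_const 2
  exact this.congr_deriv (by push_cast; ring)

lemma contOn_inv_one_sub {a b : ℝ} (h : ∀ s ∈ uIcc a b, |s| < 1) :
    ContinuousOn (fun s : ℝ => (1 - s)⁻¹) (uIcc a b) :=
  (continuous_const.sub continuous_id).continuousOn.inv₀
    fun s hs => (one_sub_pos' (h s hs)).ne'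

lemma contOn_neg_log {a b : ℝ} (h : ∀ s ∈ uIcc a b, |s| < 1) :
    ContinuousOn (fun s : ℝ => -Real.log (1 - s)) (uIcc a b) :=
  (((continuous_const.sub continuous_id).continuousOn).log
    fun s hs => (one_sub_pos' (h s hs)).ne').neg

lemma integral_inv_one_sub {x : ℝ} (hx : |x| < 1) :
    ∫ s in (0:ℝ)..x, 1 / (1 - s) = -Real.log (1 - x) := by
  have habs : ∀ s ∈ uIcc (0:ℝ) x, |s| < 1 := fun s hs =>
    lt_of_le_of_lt (abs_le_of_mem_uIcc hs) hx
  rw [integral_eq_sub_of_hasDerivAt (fun s hs => hasDerivAt_neg_log (habs s hs)) ?_]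
  · simp
  · refine ContinuousOn.intervalIntegrable ?_
    simpa [one_div] using contOn_inv_one_sub habs

lemma integral_neg_log_div {x : ℝ} (hx : |x| < 1) :
    ∫ s in (0:ℝ)..x, -Real.log (1 - s) * (1 - s)⁻¹ = Real.log (1 - x) ^ 2 / 2 := by
  have habs : ∀ s ∈ uIcc (0:ℝ) x, |s| < 1 := fun s hs =>
    lt_of_le_of_lt (abs_le_of_mem_uIcc hs) hx
  rw [integral_eq_sub_of_hasDerivAt (fun s hs => hasDerivAt_half_sq_log (habs s hs)) ?_]
  · simp
  · exact ((contOn_neg_log habs).mul (contOn_inv_one_sub habs)).intervalIntegrable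

/-- the inner double sum -/
lemma tsum_T {s : ℝ} (hs : |s| < 1) :
    ∑' p : Idx, s ^ (p.1.1 - 1) / (p.1.2 : ℝ) = -Real.log (1 - s) * (1 - s)⁻¹ := by
  have hlog : Summable fun n : ℕ => ‖s ^ (n + 1) / (n + 1 : ℝ)‖ := by
    refine Summable.of_nonneg_of_le (fun n => norm_nonneg _) (fun n => ?_)
      ((summable_geometric_of_lt_one (abs_nonneg s) hs).mul_left |s|)
    rw [norm_div, norm_pow, Real.norm_eq_abs, Real.norm_eq_abs,
      abs_of_nonneg (by positivity : (0:ℝ) ≤ (n:ℝ) + 1)]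
    calc |s| ^ (n + 1) / ((n:ℝ) + 1) ≤ |s| ^ (n + 1) / 1 :=
          div_le_div_of_nonneg_left (by positivity) one_pos
            (by exact_mod_cast Nat.succ_le_succ (Nat.zero_le n)) |>.trans_eq rfl
      _ = |s| * |s| ^ n := by rw [div_one, pow_succ, mul_comm]
  have hgeo : Summable fun n : ℕ => ‖s ^ n‖ := by
    simpa using summable_geometric_of_lt_one (abs_nonneg s) hs
  have hmul := tsum_mul_tsum_of_summable_norm (f := fun n : ℕ => s ^ (n + 1) / (n + 1 : ℝ))
    (g := fun n : ℕ => s ^ n) hlog hgeo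
  rw [(hasSum_pow_div_log_of_abs_lt_one hs).tsum_eq,
    (hasSum_geometric_of_abs_lt_one hs).tsum_eq] at hmul
  rw [← Equiv.tsum_eq e, hmul]
  refine tsum_congr fun q => ?_
  obtain ⟨m, j⟩ := q
  show s ^ ((m + j + 2) - 1) / ((m + 1 : ℕ) : ℝ) = s ^ (m + 1) / ((m:ℝ) + 1) * s ^ j
  have h : m + j + 2 - 1 = (m + 1) + j := by omega
  rw [h, pow_add]
  push_cast
  ring

lemma tsum_U {x : ℝ} (hx : |x| < 1) :
    ∑' p : Idx, x ^ p.1.1 / ((p.1.1 : ℝ) * (p.1.2 : ℝ)) = Real.log (1 - x) ^ 2 / 2 := by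
  have step : ∀ p : Idx, x ^ p.1.1 / ((p.1.1 : ℝ) * (p.1.2 : ℝ)) =
      ∫ s in (0:ℝ)..x, s ^ (p.1.1 - 1) / (p.1.2 : ℝ) := by
    rintro ⟨⟨a, b⟩, h1, h2⟩
    show x ^ a / ((a : ℝ) * (b : ℝ)) = ∫ s in (0:ℝ)..x, s ^ (a - 1) / (b : ℝ)
    rw [intervalIntegral.integral_div, integral_pow]
    have ha : a - 1 + 1 = a := by omega
    rw [ha]
    have hc : ((a - 1 : ℕ) : ℝ) + 1 = (a : ℝ) := by
      push_cast [Nat.cast_sub (show (1:ℕ) ≤ a by omega)]; ring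
    rw [hc, zero_pow (by omega : a ≠ 0)]
    have ha0 : (a : ℝ) ≠ 0 := Nat.cast_ne_zero.2 (by omega)
    have hb0 : (b : ℝ) ≠ 0 := Nat.cast_ne_zero.2 (by omega)
    field_simp
    rw [sub_zero]
  simp_rw [step]
  rw [tsum_intervalIntegral (t := x)
    (f := fun p s => s ^ (p.1.1 - 1) / (p.1.2 : ℝ))
    (fun i => (continuous_pow _).div_const _)
    (fun p => |x| ^ (p.1.1 - 1))
    (fun p s hs => ?_) (fun p => by positivity)
    (summable_aux (abs_nonneg x) hx)]
  · rw [show (∫ s in (0:ℝ)..x, ∑' p : Idx, s ^ (p.1.1 - 1) / (p.1.2 : ℝ)) =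
        ∫ s in (0:ℝ)..x, -Real.log (1 - s) * (1 - s)⁻¹ from
      intervalIntegral.integral_congr fun s hs =>
        tsum_T (lt_of_le_of_lt (abs_le_of_mem_uIcc hs) hx)]
    exact integral_neg_log_div hx
  · rw [norm_div, norm_pow, Real.norm_eq_abs, Real.norm_eq_abs, Nat.abs_cast]
    have h1 : |s| ^ (p.1.1 - 1) ≤ |x| ^ (p.1.1 - 1) :=
      pow_le_pow_left₀ (abs_nonneg s) (abs_le_of_mem_uIoc hs) _
    have h2 : (1:ℝ) ≤ (p.1.2 : ℝ) := by exact_mod_cast p.2.2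
    calc |s| ^ (p.1.1 - 1) / (p.1.2 : ℝ) ≤ |s| ^ (p.1.1 - 1) / 1 :=
          div_le_div_of_nonneg_left (by positivity) one_pos h2 |>.trans_eq rfl
      _ = |s| ^ (p.1.1 - 1) := div_one _
      _ ≤ |x| ^ (p.1.1 - 1) := h1

lemma tsum_S {t x : ℝ} (ht : |t| < 1) (hx : x ∈ Set.uIcc (0:ℝ) t) :
    ∑' p : Idx, x ^ (p.1.1 - 1) / ((p.1.1 : ℝ) * (p.1.2 : ℝ)) =
      1 / x * (Real.log (1 - x) ^ 2 / 2) := by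
  have hx1 : |x| < 1 := lt_of_le_of_lt (abs_le_of_mem_uIcc hx) ht
  by_cases hx0 : x = 0
  · subst hx0
    rw [show (∑' p : Idx, (0:ℝ) ^ (p.1.1 - 1) / ((p.1.1 : ℝ) * (p.1.2 : ℝ))) =
        ∑' _ : Idx, (0:ℝ) from tsum_congr fun p => by
      rw [zero_pow (by have := p.2.1; have := p.2.2; omega : p.1.1 - 1 ≠ 0), zero_div] ]
    simp
  · have key : ∀ p : Idx, x ^ (p.1.1 - 1) / ((p.1.1 : ℝ) * (p.1.2 : ℝ)) =
        x⁻¹ * (x ^ p.1.1 / ((p.1.1 : ℝ) * (p.1.2 : ℝ))) := by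
      rintro ⟨⟨a, b⟩, h1, h2⟩
      show x ^ (a - 1) / ((a : ℝ) * (b : ℝ)) = x⁻¹ * (x ^ a / ((a : ℝ) * (b : ℝ)))
      have h : a = (a - 1) + 1 := by omega
      rw [h, pow_succ]
      have ha0 : (((a-1)+1 : ℕ) : ℝ) ≠ 0 := Nat.cast_ne_zero.2 (by omega)
      have hb0 : (b : ℝ) ≠ 0 := Nat.cast_ne_zero.2 (by omega)
      field_simp
      rw [Nat.add_sub_cancel]
    simp_rw [key]
    rw [tsum_mul_left, tsum_U hx1, one_div]

end Li21Aux

open Li21Aux MeasureTheory Set in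
/-- For `|t| < 1`, `Li_{(2,1)}(t) = ∑_{k₁ > k₂ ≥ 1} t^{k₁}/(k₁² k₂)` equals the
iterated Chen integral `∫₀^t (1/t₁) ∫₀^{t₁} (1/(1-t₂)) ∫₀^{t₂} (1/(1-t₃)) dt₃ dt₂ dt₁`. -/
theorem Li21_eq_iterated_integral (t : ℝ) (ht : |t| < 1) :
    ∑' p : {p : ℕ × ℕ // p.2 < p.1 ∧ 1 ≤ p.2},
      t ^ p.1.1 / ((p.1.1 : ℝ) ^ 2 * (p.1.2 : ℝ)) =
    ∫ t₁ in (0 : ℝ)..t, (1 / t₁) *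
      ∫ t₂ in (0 : ℝ)..t₁, (1 / (1 - t₂)) *
        ∫ t₃ in (0 : ℝ)..t₂, 1 / (1 - t₃) := by
  -- rewrite RHS
  have hRHS : (∫ t₁ in (0 : ℝ)..t, (1 / t₁) *
      ∫ t₂ in (0 : ℝ)..t₁, (1 / (1 - t₂)) *
        ∫ t₃ in (0 : ℝ)..t₂, 1 / (1 - t₃)) =
      ∫ x in (0:ℝ)..t, 1 / x * (Real.log (1 - x) ^ 2 / 2) := by
    refine intervalIntegral.integral_congr fun x hx => ?_
    have hx1 : |x| < 1 := lt_of_le_of_lt (abs_le_of_mem_uIcc hx) ht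
    have hmid : (∫ t₂ in (0 : ℝ)..x, (1 / (1 - t₂)) *
        ∫ t₃ in (0 : ℝ)..t₂, 1 / (1 - t₃)) = Real.log (1 - x) ^ 2 / 2 := by
      rw [show (∫ t₂ in (0 : ℝ)..x, (1 / (1 - t₂)) *
          ∫ t₃ in (0 : ℝ)..t₂, 1 / (1 - t₃)) =
          ∫ s in (0:ℝ)..x, -Real.log (1 - s) * (1 - s)⁻¹ from
        intervalIntegral.integral_congr fun s hs => by
          have hs1 : |s| < 1 := lt_of_le_of_lt (abs_le_of_mem_uIcc hs) hx1
          rw [integral_inv_one_sub hs1, one_div]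
          ring]
      exact integral_neg_log_div hx1
    simp only [hmid]
  rw [hRHS]
  -- rewrite LHS termwise as integrals
  have step : ∀ p : Idx, t ^ p.1.1 / ((p.1.1 : ℝ) ^ 2 * (p.1.2 : ℝ)) =
      ∫ x in (0:ℝ)..t, x ^ (p.1.1 - 1) / ((p.1.1 : ℝ) * (p.1.2 : ℝ)) := by
    rintro ⟨⟨a, b⟩, h1, h2⟩
    show t ^ a / ((a : ℝ) ^ 2 * (b : ℝ)) =
      ∫ x in (0:ℝ)..t, x ^ (a - 1) / ((a : ℝ) * (b : ℝ))
    rw [intervalIntegral.integral_div, integral_pow]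
    have ha : a - 1 + 1 = a := by omega
    rw [ha]
    have hc : ((a - 1 : ℕ) : ℝ) + 1 = (a : ℝ) := by
      push_cast [Nat.cast_sub (show (1:ℕ) ≤ a by omega)]; ring
    rw [hc, zero_pow (by omega : a ≠ 0)]
    rw [sub_zero, div_div]
    congr 1
    ring
  rw [tsum_congr step]
  rw [tsum_intervalIntegral (t := t)
    (f := fun p x => x ^ (p.1.1 - 1) / ((p.1.1 : ℝ) * (p.1.2 : ℝ)))
    (fun i => (continuous_pow _).div_const _)
    (fun p => |t| ^ (p.1.1 - 1))
    (fun p x hx => ?_) (fun p => by positivity)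
    (summable_aux (abs_nonneg t) ht)]
  · exact intervalIntegral.integral_congr fun x hx => tsum_S ht hx
  · rw [norm_div, norm_pow, Real.norm_eq_abs, Real.norm_eq_abs]
    have h1 : |x| ^ (p.1.1 - 1) ≤ |t| ^ (p.1.1 - 1) :=
      pow_le_pow_left₀ (abs_nonneg x) (abs_le_of_mem_uIoc hx) _
    have h2 : (1:ℝ) ≤ |(p.1.1 : ℝ) * (p.1.2 : ℝ)| := by
      rw [abs_of_nonneg (by positivity)]
      have ha : (1:ℝ) ≤ (p.1.1 : ℝ) := by
        have := p.2.1; have := p.2.2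
        exact_mod_cast Nat.one_le_iff_ne_zero.2 (by omega)
      have hb : (1:ℝ) ≤ (p.1.2 : ℝ) := by exact_mod_cast p.2.2
      nlinarith
    calc |x| ^ (p.1.1 - 1) / |(p.1.1 : ℝ) * (p.1.2 : ℝ)| ≤ |x| ^ (p.1.1 - 1) / 1 :=
          div_le_div_of_nonneg_left (by positivity) one_pos h2 |>.trans_eq rfl
      _ = |x| ^ (p.1.1 - 1) := div_one _
      _ ≤ |t| ^ (p.1.1 - 1) := h1
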